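/- Let Ω ⊆ ℝ² be open, v ∈ C^∞(Ω), p ∈ (1,∞), and let x ∈ Ω be a point with Dv(x) ≠ 0 at which |Dv(x)|² Δv(x) + (p − 2) Δ∞v(x) = 0 (the p-Laplace equation in nondivergence form). Let W(y) = |Dv(y)|^{−1} Dv(y), which is C¹ on a neighborhood of x, and write Λ := |D²v(x) Dv(x)|² / |Dv(x)|⁴ (which equals |D(log|Dv|)(x)|²). Then: if p = 2, |DW(x)|² = Λ; if p > 2, |DW(x)|² ≥ Λ; and if 1 < p < 2, (p − 1)² Λ ≤ |DW(x)|² ≤ Λ. -/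

import Mathlib

open Real MeasureTheory
open scoped RealInnerProductSpace

noncomputable section

/-- The Euclidean plane ℝ². -/
abbrev E2 : Type := EuclideanSpace ℝ (Fin 2)

/-- Standard basis vector. -/
def ee (i : Fin 2) : E2 := EuclideanSpace.single i (1 : ℝ)

/-- Partial derivative ∂ᵢf. -/
def pd (i : Fin 2) (f : E2 → ℝ) (x : E2) : ℝ := fderiv ℝ f x (ee i)

/-- Second partial derivative ∂ᵢ∂ⱼf. -/
def pd2 (i j : Fin 2) (f : E2 → ℝ) (x : E2) : ℝ := pd i (pd j f) x

/-- |Df|², squared Euclidean norm of the gradient. -/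
def gradSq (f : E2 → ℝ) (x : E2) : ℝ := (pd 0 f x) ^ 2 + (pd 1 f x) ^ 2

/-- |Df|, Euclidean norm of the gradient. -/
def gradNorm (f : E2 → ℝ) (x : E2) : ℝ := Real.sqrt (gradSq f x)

/-- Laplacian Δf = tr D²f. -/
def lap (f : E2 → ℝ) (x : E2) : ℝ := pd2 0 0 f x + pd2 1 1 f x

/-- ∞-Laplacian Δ∞f = D²f Df · Df. -/
def infLap (f : E2 → ℝ) (x : E2) : ℝ :=
  pd2 0 0 f x * pd 0 f x * pd 0 f x + pd2 0 1 f x * pd 0 f x * pd 1 f x +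
  pd2 1 0 f x * pd 1 f x * pd 0 f x + pd2 1 1 f x * pd 1 f x * pd 1 f x

/-- |D²f|², squared Frobenius norm of the Hessian. -/
def hessFrobSq (f : E2 → ℝ) (x : E2) : ℝ :=
  (pd2 0 0 f x) ^ 2 + (pd2 0 1 f x) ^ 2 + (pd2 1 0 f x) ^ 2 + (pd2 1 1 f x) ^ 2

/-- det D²f, determinant of the Hessian. -/
def detHess (f : E2 → ℝ) (x : E2) : ℝ :=
  pd2 0 0 f x * pd2 1 1 f x - pd2 0 1 f x * pd2 1 0 f x

/-- |D²f Df|². -/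
def hessGradSq (f : E2 → ℝ) (x : E2) : ℝ :=
  (pd2 0 0 f x * pd 0 f x + pd2 0 1 f x * pd 1 f x) ^ 2 +
  (pd2 1 0 f x * pd 0 f x + pd2 1 1 f x * pd 1 f x) ^ 2

/-- Jacobian determinant of the planar map with components `F 0`, `F 1`. -/
def jdet (F : Fin 2 → E2 → ℝ) (x : E2) : ℝ :=
  pd 0 (F 0) x * pd 1 (F 1) x - pd 1 (F 0) x * pd 0 (F 1) x

/-- Squared Frobenius norm of the Jacobian of the planar map with components `F 0`, `F 1`. -/
def jFrobSq (F : Fin 2 → E2 → ℝ) (x : E2) : ℝ :=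
  (pd 0 (F 0) x) ^ 2 + (pd 1 (F 0) x) ^ 2 + (pd 0 (F 1) x) ^ 2 + (pd 1 (F 1) x) ^ 2

/-- Df · Dg. -/
def gradDot (f g : E2 → ℝ) (x : E2) : ℝ :=
  pd 0 f x * pd 0 g x + pd 1 f x * pd 1 g x

/-- D²ψ Dv · Dv. -/
def hessQuad (ψ v : E2 → ℝ) (x : E2) : ℝ :=
  pd2 0 0 ψ x * pd 0 v x * pd 0 v x + pd2 0 1 ψ x * pd 0 v x * pd 1 v x +
  pd2 1 0 ψ x * pd 1 v x * pd 0 v x + pd2 1 1 ψ x * pd 1 v x * pd 1 v x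

/-- (D²v Dv) · Dψ. -/
def hessGradDot (v ψ : E2 → ℝ) (x : E2) : ℝ :=
  (pd2 0 0 v x * pd 0 v x + pd2 0 1 v x * pd 1 v x) * pd 0 ψ x +
  (pd2 1 0 v x * pd 0 v x + pd2 1 1 v x * pd 1 v x) * pd 1 ψ x

/-- Smooth compactly supported test function on Ω. -/
def IsTestOn (ψ : E2 → ℝ) (Ω : Set E2) : Prop :=
  ContDiff ℝ (⊤ : ℕ∞) ψ ∧ HasCompactSupport ψ ∧ tsupport ψ ⊆ Ω

/-- Components of W = |Dv|⁻¹ Dv. -/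
def Wcomp (v : E2 → ℝ) (i : Fin 2) : E2 → ℝ := fun y => (gradNorm v y)⁻¹ * pd i v y

lemma aux_pd_contDiffAt (v : E2 → ℝ) (x : E2) (hvx : ContDiffAt ℝ (⊤:ℕ∞) v x) (k : Fin 2) :
    ContDiffAt ℝ (⊤:ℕ∞) (pd k v) x := by
  have hfd : ContDiffAt ℝ (⊤:ℕ∞) (fderiv ℝ v) x := hvx.fderiv_right (by simp)
  exact hfd.clm_apply contDiffAt_const

lemma aux_symm (v : E2 → ℝ) (x : E2) (hvx : ContDiffAt ℝ (⊤:ℕ∞) v x) (i j : Fin 2) :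
    pd2 i j v x = pd2 j i v x := by
  have hfd : ContDiffAt ℝ (⊤:ℕ∞) (fderiv ℝ v) x := hvx.fderiv_right (by simp)
  have hd : DifferentiableAt ℝ (fderiv ℝ v) x := hfd.differentiableAt (by simp)
  have key : ∀ a : E2, fderiv ℝ (fun y => fderiv ℝ v y a) x = (fderiv ℝ (fderiv ℝ v) x).flip a := by
    intro a
    rw [fderiv_clm_apply hd (differentiableAt_const a)]
    simp
  have hsymm : ∀ a b : E2, fderiv ℝ (fderiv ℝ v) x a b = fderiv ℝ (fderiv ℝ v) x b a := by
    have h2 : (2 : WithTop ℕ∞) ≤ ((⊤:ℕ∞) : WithTop ℕ∞) := by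
      rw [show ((2:WithTop ℕ∞)) = ((2:ℕ∞):WithTop ℕ∞) by norm_cast]
      exact_mod_cast le_top
    exact hvx.isSymmSndFDerivAt (by rw [minSmoothness_of_isRCLikeNormedField]; exact h2)
  show fderiv ℝ (fun y => fderiv ℝ v y (ee j)) x (ee i) =
    fderiv ℝ (fun y => fderiv ℝ v y (ee i)) x (ee j)
  rw [key, key]
  exact hsymm _ _

lemma aux_pd_Wcomp (Ω : Set E2) (hΩ : IsOpen Ω) (v : E2 → ℝ)
    (hv : ContDiffOn ℝ (⊤ : ℕ∞) v Ω) (x : E2) (hx : x ∈ Ω) (hgrad : gradSq v x ≠ 0)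
    (i j : Fin 2) :
    pd i (Wcomp v j) x = (gradNorm v x)⁻¹ * pd2 i j v x
      - ((gradNorm v x) ^ 3)⁻¹ *
        (pd2 i 0 v x * pd 0 v x + pd2 i 1 v x * pd 1 v x) * pd j v x := by
  have hvx : ContDiffAt ℝ (⊤:ℕ∞) v x := hv.contDiffAt (hΩ.mem_nhds hx)
  have hq0 : 0 < gradSq v x := by
    have : (0:ℝ) ≤ gradSq v x := by
      have : gradSq v x = (pd 0 v x)^2 + (pd 1 v x)^2 := rfl
      rw [this]; positivity
    exact lt_of_le_of_ne this (Ne.symm hgrad)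
  set q := gradSq v x with hqdef
  set r := gradNorm v x with hrdef
  have hr : r = Real.sqrt q := rfl
  have hr0 : 0 < r := Real.sqrt_pos.2 hq0
  have hr2 : r ^ 2 = q := Real.sq_sqrt hq0.le
  have hD : ∀ k : Fin 2, HasFDerivAt (pd k v) (fderiv ℝ (pd k v) x) x := fun k =>
    ((aux_pd_contDiffAt v x hvx k).differentiableAt (by simp)).hasFDerivAt
  have hG : HasFDerivAt (gradSq v)
      ((pd 0 v x • fderiv ℝ (pd 0 v) x + pd 0 v x • fderiv ℝ (pd 0 v) x) +
       (pd 1 v x • fderiv ℝ (pd 1 v) x + pd 1 v x • fderiv ℝ (pd 1 v) x)) x := by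
    have he : gradSq v = fun y => pd 0 v y * pd 0 v y + pd 1 v y * pd 1 v y := by
      funext y; simp [gradSq, pow_two]
    rw [he]
    exact ((hD 0).mul (hD 0)).add ((hD 1).mul (hD 1))
  have hs : HasDerivAt (fun t : ℝ => (Real.sqrt t)⁻¹)
      (-(1 / (2 * Real.sqrt q)) / (Real.sqrt q) ^ 2) q :=
    (Real.hasDerivAt_sqrt hq0.ne').inv (Real.sqrt_ne_zero'.2 hq0)
  have hinv : HasFDerivAt (fun y => (Real.sqrt (gradSq v y))⁻¹)
      ((-(1 / (2 * Real.sqrt q)) / (Real.sqrt q) ^ 2) •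
        ((pd 0 v x • fderiv ℝ (pd 0 v) x + pd 0 v x • fderiv ℝ (pd 0 v) x) +
         (pd 1 v x • fderiv ℝ (pd 1 v) x + pd 1 v x • fderiv ℝ (pd 1 v) x))) x :=
    by have := hs.comp_hasFDerivAt x hG; exact this
  have hW : HasFDerivAt (Wcomp v j)
      ((Real.sqrt (gradSq v x))⁻¹ • fderiv ℝ (pd j v) x + pd j v x •
        ((-(1 / (2 * Real.sqrt q)) / (Real.sqrt q) ^ 2) •
          ((pd 0 v x • fderiv ℝ (pd 0 v) x + pd 0 v x • fderiv ℝ (pd 0 v) x) +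
           (pd 1 v x • fderiv ℝ (pd 1 v) x + pd 1 v x • fderiv ℝ (pd 1 v) x)))) x :=
    hinv.mul (hD j)
  have hpdW : pd i (Wcomp v j) x = _ := congrArg (fun L => L (ee i)) hW.fderiv
  rw [hpdW]
  have e0 : fderiv ℝ (pd 0 v) x (ee i) = pd2 i 0 v x := rfl
  have e1 : fderiv ℝ (pd 1 v) x (ee i) = pd2 i 1 v x := rfl
  have ej : fderiv ℝ (pd j v) x (ee i) = pd2 i j v x := rfl
  simp only [ContinuousLinearMap.add_apply, ContinuousLinearMap.smul_apply, smul_eq_mul,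
    e0, e1, ej, ← hr]
  have hrne : r ≠ 0 := hr0.ne'
  rw [show Real.sqrt (gradSq v x) = r from rfl]
  field_simp
  nlinarith [hr2, sq_nonneg r, mul_pos hr0 hq0]

lemma aux_J (a b c d u w q r : ℝ) (hq : q = u^2+w^2) (hr2 : r^2 = q) (hr0 : 0 < r) :
    ((r)⁻¹*a - (r^3)⁻¹*(a*u+b*w)*u)^2 + ((r)⁻¹*c - (r^3)⁻¹*(c*u+d*w)*u)^2 +
    ((r)⁻¹*b - (r^3)⁻¹*(a*u+b*w)*w)^2 + ((r)⁻¹*d - (r^3)⁻¹*(c*u+d*w)*w)^2 =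
    (a^2+b^2+c^2+d^2)/q - ((a*u+b*w)^2 + (c*u+d*w)^2)/q^2 := by
  subst hq
  have hqpos : (0:ℝ) < u^2+w^2 := by rw [← hr2]; positivity
  have e : ∀ m N g : ℝ, (r⁻¹*m - (r^3)⁻¹*N*g)^2 = (m*(u^2+w^2) - N*g)^2/(u^2+w^2)^3 := by
    intro m N g
    rw [show ((u^2+w^2):ℝ) = r^2 from hr2.symm]
    field_simp
  rw [e, e, e, e]
  field_simp
  ring

set_option maxHeartbeats 1000000 in
lemma aux_alg (a b d u w p q H F : ℝ) (hq : q = u^2+w^2) (hq0 : 0 < q)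
    (hH : H = (a*u+b*w)^2 + (b*u+d*w)^2) (hF : F = a^2+b^2+b^2+d^2)
    (hpde : q*(a+d) + (p-2)*(a*u^2+2*b*u*w+d*w^2) = 0) (hp : 1 < p) :
    (p = 2 → F/q - H/q^2 = H/q^2) ∧ (2 < p → H/q^2 ≤ F/q - H/q^2) ∧
    (p < 2 → (p-1)^2*(H/q^2) ≤ F/q - H/q^2 ∧ F/q - H/q^2 ≤ H/q^2) := by
  have key1 : q*(q*F - 2*H) =
      ((p-1)^2-1)*(a*u^2+2*b*u*w+d*w^2)^2 := by
    subst hq hH hF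
    linear_combination
      ((a*w^2-2*b*u*w+d*u^2) - (p-1)*(a*u^2+2*b*u*w+d*w^2)) * hpde
  have key2 : q*(q*F - H - (p-1)^2*H) =
      (1-(p-1)^2)*(b*(u^2-w^2)+(d-a)*u*w)^2 := by
    subst hq hH hF
    linear_combination
      ((a*w^2-2*b*u*w+d*u^2) - (p-1)*(a*u^2+2*b*u*w+d*w^2)) * hpde
  have hd1 : F/q - H/q^2 - H/q^2 = (q*F - 2*H)/q^2 := by field_simp; ring
  have hd2 : F/q - H/q^2 - (p-1)^2*(H/q^2) = (q*F - H - (p-1)^2*H)/q^2 := by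
    field_simp
  refine ⟨fun hp2 => ?_, fun hp2 => ?_, fun hp2 => ?_⟩
  · have h0 : q*F - 2*H = 0 := by
      have : q*(q*F - 2*H) = 0 := by rw [key1, hp2]; ring
      exact (mul_eq_zero.1 this).resolve_left hq0.ne'
    have := hd1
    rw [h0] at this
    simp at this
    linarith
  · have hc : (0:ℝ) ≤ (p-1)^2 - 1 := by nlinarith [mul_nonneg (show (0:ℝ) ≤ p-2 by linarith) (show (0:ℝ) ≤ p by linarith)]
    have h1 : 0 ≤ q*(q*F - 2*H) := by
      rw [key1]; exact mul_nonneg hc (sq_nonneg _)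
    have h0 : 0 ≤ q*F - 2*H := by nlinarith [h1, hq0]
    have : 0 ≤ (q*F - 2*H)/q^2 := by positivity
    linarith [hd1]
  · have hpp : (0:ℝ) ≤ (2-p)*p := mul_nonneg (by linarith) (by linarith)
    have hc1 : (0:ℝ) ≤ 1 - (p-1)^2 := by nlinarith [hpp]
    have hc2 : (p-1)^2 - 1 ≤ 0 := by nlinarith [hpp]
    constructor
    · have h1 : 0 ≤ q*(q*F - H - (p-1)^2*H) := by
        rw [key2]; exact mul_nonneg hc1 (sq_nonneg _)
      have h0 : 0 ≤ q*F - H - (p-1)^2*H := by nlinarith [h1, hq0, mul_pos hq0 hq0]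
      have : 0 ≤ (q*F - H - (p-1)^2*H)/q^2 := by positivity
      linarith [hd2]
    · have h1 : q*(q*F - 2*H) ≤ 0 := by
        rw [key1]; exact mul_nonpos_of_nonpos_of_nonneg hc2 (sq_nonneg _)
      have h0 : q*F - 2*H ≤ 0 := by nlinarith [h1, hq0]
      have : (q*F - 2*H)/q^2 ≤ 0 := div_nonpos_of_nonpos_of_nonneg h0 (by positivity)
      linarith [hd1]

/-- comparisons between |DW|² and |D log|Dv||² for W = |Dv|⁻¹Dv at a
point where the p-Laplace equation holds in nondivergence form and Dv ≠ 0. -/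
theorem stmt_10 (Ω : Set E2) (hΩ : IsOpen Ω) (v : E2 → ℝ)
    (hv : ContDiffOn ℝ (⊤ : ℕ∞) v Ω) (p : ℝ) (hp : 1 < p)
    (x : E2) (hx : x ∈ Ω) (hgrad : gradSq v x ≠ 0)
    (hpl : gradSq v x * lap v x + (p - 2) * infLap v x = 0) :
    (p = 2 → jFrobSq (Wcomp v) x = hessGradSq v x / (gradSq v x) ^ 2) ∧
    (2 < p → hessGradSq v x / (gradSq v x) ^ 2 ≤ jFrobSq (Wcomp v) x) ∧
    (p < 2 →
      (p - 1) ^ 2 * (hessGradSq v x / (gradSq v x) ^ 2) ≤ jFrobSq (Wcomp v) x ∧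
      jFrobSq (Wcomp v) x ≤ hessGradSq v x / (gradSq v x) ^ 2) := by
  have hvx : ContDiffAt ℝ (⊤:ℕ∞) v x := hv.contDiffAt (hΩ.mem_nhds hx)
  have hq0 : 0 < gradSq v x := by
    have h : (0:ℝ) ≤ gradSq v x := by
      have : gradSq v x = (pd 0 v x)^2 + (pd 1 v x)^2 := rfl
      rw [this]; positivity
    exact lt_of_le_of_ne h (Ne.symm hgrad)
  set a := pd2 0 0 v x with ha
  set b := pd2 0 1 v x with hb
  set c := pd2 1 0 v x with hc
  set d := pd2 1 1 v x with hd
  set u := pd 0 v x with hu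
  set w := pd 1 v x with hw
  set q := gradSq v x with hqdef
  set r := gradNorm v x with hrdef
  have hcb : c = b := by rw [hc, hb]; exact aux_symm v x hvx 1 0
  have hq : q = u^2 + w^2 := rfl
  have hr0 : 0 < r := Real.sqrt_pos.2 hq0
  have hr2 : r^2 = q := Real.sq_sqrt hq0.le
  have hJ : jFrobSq (Wcomp v) x = (a^2+b^2+c^2+d^2)/q - ((a*u+b*w)^2 + (c*u+d*w)^2)/q^2 := by
    have e00 := aux_pd_Wcomp Ω hΩ v hv x hx hgrad 0 0
    have e10 := aux_pd_Wcomp Ω hΩ v hv x hx hgrad 1 0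
    have e01 := aux_pd_Wcomp Ω hΩ v hv x hx hgrad 0 1
    have e11 := aux_pd_Wcomp Ω hΩ v hv x hx hgrad 1 1
    have hjf : jFrobSq (Wcomp v) x = (pd 0 (Wcomp v 0) x)^2 + (pd 1 (Wcomp v 0) x)^2 +
        (pd 0 (Wcomp v 1) x)^2 + (pd 1 (Wcomp v 1) x)^2 := rfl
    rw [hjf, e00, e10, e01, e11]
    exact aux_J a b c d u w q r hq hr2 hr0
  have hH : hessGradSq v x = (a*u+b*w)^2 + (c*u+d*w)^2 := rfl
  have hpde : q*(a+d) + (p-2)*(a*u^2+2*b*u*w+d*w^2) = 0 := by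
    have h1 : lap v x = a + d := rfl
    have h2 : infLap v x = a*u*u + b*u*w + c*w*u + d*w*w := rfl
    rw [h1, h2, hcb] at hpl
    linear_combination hpl
  have halg := aux_alg a b d u w p q (hessGradSq v x) (a^2+b^2+c^2+d^2) hq hq0
    (by rw [hH, hcb]) (by rw [hcb]) hpde hp
  rw [hJ]
  rw [hH, hcb] at *
  exact halg
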